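/- arXiv:0909.3225 — 2 statements merged into one kernel-verified Lean document; each statement's English description precedes it below -/
import Mathlib

section
/- Suppose m : ℝⁿ \ {0} → ℂ satisfies |∂^α m(ξ)| ≤ C |ξ|^{-|α|} for all multi-indices α ∈ {0,1}ⁿ with |α| ≤ ⌈nγ⌉, where γ ∈ (0,1]. Then for every α ∈ {0,1}ⁿ with |α| ≤ ⌈nγ⌉ and every h ∈ ℝⁿ with |ξ| > 2|h|, the Mihlin–Hölder estimate |∏_{i : α_i=1}(I - τ_{h_i e_i})m(ξ)| ≤ C' |h^{αγ}| |ξ|^{-|α|γ} holds, with C' depending only on C, n, γ. -/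
open MeasureTheory

noncomputable section

/-- The `i`-th standard basis vector of `ℝⁿ`. -/
def stdBasis {n : ℕ} (i : Fin n) : EuclideanSpace ℝ (Fin n) := EuclideanSpace.single i 1

/-- Iterated partial derivative `∂^α` along the coordinates listed in `L`. -/
noncomputable def iterPDeriv {n : ℕ} (L : List (Fin n)) (m : EuclideanSpace ℝ (Fin n) → ℂ) :
    EuclideanSpace ℝ (Fin n) → ℂ :=
  L.foldr (fun i g => fun x => fderiv ℝ g x (stdBasis i)) m

/-- Iterated difference `∏_{i ∈ S} (I - τ_{h_i e_i}) m (ξ)`. -/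
def iterDiff {n : ℕ} (h : EuclideanSpace ℝ (Fin n)) (S : Finset (Fin n))
    (m : EuclideanSpace ℝ (Fin n) → ℂ) (ξ : EuclideanSpace ℝ (Fin n)) : ℂ :=
  ∑ T ∈ S.powerset, (-1 : ℂ) ^ T.card * m (ξ - ∑ i ∈ T, h i • stdBasis i)

namespace Stmt2Aux

variable {n : ℕ}

lemma norm_le_of_coord {v w : EuclideanSpace ℝ (Fin n)} (h : ∀ i, |v i| ≤ |w i|) :
    ‖v‖ ≤ ‖w‖ := by
  rw [EuclideanSpace.norm_eq, EuclideanSpace.norm_eq]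
  apply Real.sqrt_le_sqrt
  apply Finset.sum_le_sum
  intro i _
  simp only [Real.norm_eq_abs]
  exact pow_le_pow_left₀ (abs_nonneg _) (h i) 2

lemma iterPDeriv_append (L L' : List (Fin n)) (f : EuclideanSpace ℝ (Fin n) → ℂ) :
    iterPDeriv (L ++ L') f = iterPDeriv L (iterPDeriv L' f) := by
  simp [iterPDeriv, List.foldr_append]

lemma sum_coord (h : EuclideanSpace ℝ (Fin n)) (T : Finset (Fin n)) (i : Fin n) :
    (∑ j ∈ T, h j • stdBasis j) i = if i ∈ T then h i else 0 := by
  rw [WithLp.ofLp_sum, Finset.sum_apply]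
  simp [stdBasis, EuclideanSpace.single_apply, mul_ite]

lemma iterDiff_insert (h : EuclideanSpace ℝ (Fin n)) {j : Fin n} {S : Finset (Fin n)}
    (hj : j ∉ S) (f : EuclideanSpace ℝ (Fin n) → ℂ) (ξ : EuclideanSpace ℝ (Fin n)) :
    iterDiff h (insert j S) f ξ
      = iterDiff h S f ξ - iterDiff h S f (ξ - h j • stdBasis j) := by
  classical
  unfold iterDiff
  rw [Finset.powerset_insert, Finset.sum_union, Finset.sum_image]
  · rw [sub_eq_add_neg, ← Finset.sum_neg_distrib]
    congr 1
    apply Finset.sum_congr rfl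
    intro T hT
    rw [Finset.mem_powerset] at hT
    have hjT : j ∉ T := fun hh => hj (hT hh)
    rw [Finset.card_insert_of_notMem hjT, Finset.sum_insert hjT, pow_succ,
      sub_add_eq_sub_sub, sub_right_comm]
    ring
  · intro x hx y hy hxy
    rw [Finset.mem_coe, Finset.mem_powerset] at hx hy
    have h1 : (insert j x).erase j = x := Finset.erase_insert (fun hh => hj (hx hh))
    have h2 : (insert j y).erase j = y := Finset.erase_insert (fun hh => hj (hy hh))
    rw [← h1, ← h2, hxy]
  · rw [Finset.disjoint_left]
    intro T hT hT'
    rw [Finset.mem_powerset] at hT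
    rw [Finset.mem_image] at hT'
    obtain ⟨T', _, rfl⟩ := hT'
    exact hj (hT (Finset.mem_insert_self j T'))



lemma coord_est (h ξ₀ ξ : EuclideanSpace ℝ (Fin n)) (S : Finset (Fin n)) (j : Fin n)
    (hj : j ∈ S)
    (hc : ∀ i, |ξ₀ i - ξ i| ≤ |h i|) (hfix : ∀ i ∈ S, ξ i = ξ₀ i)
    (t : ℝ) (ht : |t| ≤ 1) (T : Finset (Fin n)) (hT : T ⊆ S.erase j) :
    ∀ i, |ξ₀ i - (ξ - t • (h j • stdBasis j) - ∑ i ∈ T, h i • stdBasis i) i| ≤ |h i| := by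
  intro i
  have happ : (ξ - t • (h j • stdBasis j) - ∑ i ∈ T, h i • stdBasis i) i
      = ξ i - t * ((h j • stdBasis j) i) - (if i ∈ T then h i else 0) := by
    rw [← sum_coord h T i]; simp
  have hsingle : ((h j • stdBasis j : EuclideanSpace ℝ (Fin n)) i)
      = if i = j then h j else 0 := by
    simp [stdBasis, EuclideanSpace.single_apply]
  rw [happ, hsingle]
  by_cases hij : i = j
  · subst hij
    have hiT : i ∉ T := fun hh => (Finset.notMem_erase i S) (hT hh)
    rw [if_pos rfl, if_neg hiT, hfix i hj]
    have e : ξ₀ i - (ξ₀ i - t * h i - 0) = t * h i := by ring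
    rw [e, abs_mul]
    calc |t| * |h i| ≤ 1 * |h i| := by
          exact mul_le_mul_of_nonneg_right ht (abs_nonneg _)
      _ = |h i| := one_mul _
  · simp only [if_neg hij, mul_zero, sub_zero]
    by_cases hiT : i ∈ T
    · have hiS : i ∈ S := Finset.mem_of_mem_erase (hT hiT)
      rw [if_pos hiT, hfix i hiS]
      simp
    · rw [if_neg hiT]
      simpa using hc i

lemma keyB (h ξ₀ : EuclideanSpace ℝ (Fin n))
    (hne : ∀ x : EuclideanSpace ℝ (Fin n), (∀ i, |ξ₀ i - x i| ≤ |h i|) → x ≠ 0) :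
    ∀ (k : ℕ) (S : Finset (Fin n)), S.card = k →
    ∀ (f : EuclideanSpace ℝ (Fin n) → ℂ) (D : ℝ),
      ContDiffOn ℝ (k : ℕ∞) f {x : EuclideanSpace ℝ (Fin n) | x ≠ 0} →
      (∀ L : List (Fin n), L.Nodup → L.toFinset = S →
        ∀ x : EuclideanSpace ℝ (Fin n), (∀ i, |ξ₀ i - x i| ≤ |h i|) →
          ‖iterPDeriv L f x‖ ≤ D) →
      ∀ ξ : EuclideanSpace ℝ (Fin n), (∀ i, |ξ₀ i - ξ i| ≤ |h i|) →
        (∀ i ∈ S, ξ i = ξ₀ i) →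
        ‖iterDiff h S f ξ‖ ≤ (∏ i ∈ S, |h i|) * D := by
  intro k
  induction k with
  | zero =>
    intro S hS f D _ hb ξ hc hfix
    rw [Finset.card_eq_zero] at hS; subst hS
    have h0 := hb [] (by simp) (by simp) ξ hc
    simpa [iterDiff, iterPDeriv] using h0
  | succ k ih =>
    intro S hS f D hf hb ξ hc hfix
    obtain ⟨j, hj⟩ := Finset.card_pos.mp (by omega : 0 < S.card)
    set S' := S.erase j with hS'def
    have hjS' : j ∉ S' := Finset.notMem_erase j S
    have hins : insert j S' = S := Finset.insert_erase hj
    have hS'card : S'.card = k := by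
      rw [hS'def, Finset.card_erase_of_mem hj, hS]; omega
    set w : EuclideanSpace ℝ (Fin n) := h j • stdBasis j with hwdef
    set f' : EuclideanSpace ℝ (Fin n) → ℂ := fun x => fderiv ℝ f x (stdBasis j) with hf'def
    -- smoothness of f'
    have hopen : IsOpen {x : EuclideanSpace ℝ (Fin n) | x ≠ 0} := isOpen_ne
    have hf' : ContDiffOn ℝ (k : ℕ∞) f' {x : EuclideanSpace ℝ (Fin n) | x ≠ 0} := by
      have h1 : ContDiffOn ℝ (k : ℕ∞) (fderiv ℝ f) {x : EuclideanSpace ℝ (Fin n) | x ≠ 0} :=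
        hf.fderiv_of_isOpen hopen (by norm_cast)
      exact h1.clm_apply contDiffOn_const
    have hdo : DifferentiableOn ℝ f {x : EuclideanSpace ℝ (Fin n) | x ≠ 0} :=
      hf.differentiableOn (by simp)
    -- derivative bound hypothesis for f'
    have hb' : ∀ L : List (Fin n), L.Nodup → L.toFinset = S' →
        ∀ x : EuclideanSpace ℝ (Fin n), (∀ i, |ξ₀ i - x i| ≤ |h i|) →
          ‖iterPDeriv L f' x‖ ≤ D := by
      intro L hN hTs x hx
      have hjL : j ∉ L := by
        rw [← List.mem_toFinset, hTs]; exact hjS'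
      have hkey : iterPDeriv (L ++ [j]) f = iterPDeriv L f' := by
        rw [iterPDeriv_append]; rfl
      rw [← hkey]
      refine hb (L ++ [j]) ?_ ?_ x hx
      · rw [List.nodup_append]
        exact ⟨hN, List.nodup_singleton j, by simpa using fun a (ha : a ∈ L) (e : a = j) => hjL (e ▸ ha)⟩
      · rw [List.toFinset_append, hTs, Finset.union_comm]
        simpa [← Finset.insert_eq] using hins
    -- the curve and its derivative
    set φ : ℝ → ℂ := fun t => iterDiff h S' f (ξ - t • w) with hφdef
    set ψ : ℝ → ℂ := fun t => (-(h j)) • iterDiff h S' f' (ξ - t • w) with hψdef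
    have hterm : ∀ t : ℝ, |t| ≤ 1 → ∀ T ∈ S'.powerset,
        HasDerivAt (fun s : ℝ => (-1:ℂ)^T.card * f (ξ - s • w - ∑ i ∈ T, h i • stdBasis i))
          ((-1:ℂ)^T.card * ((-(h j)) • f' (ξ - t • w - ∑ i ∈ T, h i • stdBasis i))) t := by
      intro t ht T hT
      rw [Finset.mem_powerset] at hT
      set c : EuclideanSpace ℝ (Fin n) := ∑ i ∈ T, h i • stdBasis i with hcdef
      have hpt : ∀ s : ℝ, (ξ - s • w - c) = (ξ - c) - s • w := fun s => sub_right_comm _ _ _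
      have hco := coord_est h ξ₀ ξ S j hj hc hfix t ht T hT
      have hptne : ξ - t • w - c ≠ 0 := hne _ hco
      have hfd : HasFDerivAt f (fderiv ℝ f (ξ - t • w - c)) (ξ - t • w - c) :=
        (hdo.differentiableAt (hopen.mem_nhds hptne)).hasFDerivAt
      have hg : HasDerivAt (fun s : ℝ => (ξ - c) - s • w) (-w) t := by
        simpa using ((hasDerivAt_id t).smul_const w).const_sub (ξ - c)
      have hfun : (fun s : ℝ => (-1:ℂ)^T.card * f (ξ - s • w - c))
          = fun s : ℝ => (-1:ℂ)^T.card * f ((ξ - c) - s • w) := by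
        funext s; rw [hpt s]
      rw [hfun]
      have hfd2 : HasFDerivAt f (fderiv ℝ f (ξ - t • w - c)) ((ξ - c) - t • w) := by
        rw [← hpt t]; exact hfd
      have hcomp : HasDerivAt (fun s : ℝ => f ((ξ - c) - s • w))
          (fderiv ℝ f (ξ - t • w - c) (-w)) t := hfd2.comp_hasDerivAt t hg
      have hval : fderiv ℝ f (ξ - t • w - c) (-w) = (-(h j)) • f' (ξ - t • w - c) := by
        rw [map_neg, hwdef, (fderiv ℝ f (ξ - t • w - c)).map_smul, neg_smul]
      rw [hval] at hcomp
      exact hcomp.const_mul _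
    have hφψ : ∀ t ∈ Set.Icc (0:ℝ) 1, HasDerivWithinAt φ (ψ t) (Set.Icc 0 1) t := by
      intro t ht
      have habs : |t| ≤ 1 := abs_le.mpr ⟨by linarith [ht.1], ht.2⟩
      have hsum : HasDerivAt
          (fun s : ℝ => ∑ T ∈ S'.powerset, (-1:ℂ)^T.card * f (ξ - s • w - ∑ i ∈ T, h i • stdBasis i))
          (∑ T ∈ S'.powerset, (-1:ℂ)^T.card * ((-(h j)) • f' (ξ - t • w - ∑ i ∈ T, h i • stdBasis i))) t :=
        HasDerivAt.fun_sum (fun T hT => hterm t habs T hT)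
      have heq : (∑ T ∈ S'.powerset,
            (-1:ℂ)^T.card * ((-(h j)) • f' (ξ - t • w - ∑ i ∈ T, h i • stdBasis i))) = ψ t := by
        rw [hψdef]
        show _ = (-(h j)) • ∑ T ∈ S'.powerset, (-1:ℂ)^T.card * f' ((ξ - t • w) - ∑ i ∈ T, h i • stdBasis i)
        rw [Finset.smul_sum]
        exact Finset.sum_congr rfl fun T _ => mul_smul_comm _ _ _
      rw [heq] at hsum
      exact hsum.hasDerivWithinAt
    -- bound on ψ
    have hbnd : ∀ t ∈ Set.Icc (0:ℝ) 1, ‖ψ t‖ ≤ (∏ i ∈ S, |h i|) * D := by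
      intro t ht
      have habs : |t| ≤ 1 := abs_le.mpr ⟨by linarith [ht.1], ht.2⟩
      have hcoξt : ∀ i, |ξ₀ i - (ξ - t • w) i| ≤ |h i| := by
        have := coord_est h ξ₀ ξ S j hj hc hfix t habs ∅ (Finset.empty_subset _)
        simpa [hwdef] using this
      have hfixξt : ∀ i ∈ S', (ξ - t • w) i = ξ₀ i := by
        intro i hi
        have hij : i ≠ j := Finset.ne_of_mem_erase hi
        have happ : (ξ - t • w) i = ξ i - t * ((h j • stdBasis j : EuclideanSpace ℝ (Fin n)) i) := by
          simp [hwdef]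
        have : ((h j • stdBasis j : EuclideanSpace ℝ (Fin n)) i) = 0 := by
          simp [stdBasis, EuclideanSpace.single_apply, hij]
        rw [happ, this, mul_zero, sub_zero]
        exact hfix i (Finset.mem_of_mem_erase hi)
      have hI := ih S' hS'card f' D hf' hb' (ξ - t • w) hcoξt hfixξt
      calc ‖ψ t‖ = |h j| * ‖iterDiff h S' f' (ξ - t • w)‖ := by
            rw [hψdef]; rw [norm_smul]; simp
        _ ≤ |h j| * ((∏ i ∈ S', |h i|) * D) :=
            mul_le_mul_of_nonneg_left hI (abs_nonneg _)
        _ = (∏ i ∈ S, |h i|) * D := by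
            rw [← hins, Finset.prod_insert hjS']; ring
    -- MVT
    have hMVT := (convex_Icc (0:ℝ) 1).norm_image_sub_le_of_norm_hasDerivWithin_le hφψ hbnd
      (Set.mem_Icc.mpr ⟨le_refl 0, zero_le_one⟩) (Set.mem_Icc.mpr ⟨zero_le_one, le_refl 1⟩)
    have hfinal : iterDiff h S f ξ = φ 0 - φ 1 := by
      rw [← hins, iterDiff_insert h hjS']
      rw [hφdef]
      norm_num
      rfl
    rw [hfinal, norm_sub_rev]
    simpa using hMVT


lemma interp {X K Q γ : ℝ} (hX : 0 ≤ X) (hK : 0 < K) (hQ : 0 ≤ Q)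
    (hγ0 : 0 < γ) (hγ1 : γ ≤ 1) (h1 : X ≤ K) (h2 : X ≤ K * Q) : X ≤ K * Q ^ γ := by
  rcases eq_or_lt_of_le hX with h0 | h0
  · rw [← h0]; positivity
  · have e1 : X = X ^ (1 - γ) * X ^ γ := by
      rw [← Real.rpow_add h0]; norm_num
    rw [e1]
    have h3 : X ^ (1 - γ) * X ^ γ ≤ K ^ (1 - γ) * (K * Q) ^ γ :=
      mul_le_mul (Real.rpow_le_rpow hX h1 (by linarith))
        (Real.rpow_le_rpow hX h2 hγ0.le) (Real.rpow_nonneg hX _) (Real.rpow_nonneg hK.le _)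
    refine h3.trans (le_of_eq ?_)
    rw [Real.mul_rpow hK.le hQ, ← mul_assoc, ← Real.rpow_add hK]
    norm_num

end Stmt2Aux

open Stmt2Aux

/-- If `|∂^α m(ξ)| ≤ C |ξ|^{-|α|}` for all multi-indices `α ∈ {0,1}ⁿ`
(encoded as duplicate-free lists of coordinates) with `|α| ≤ ⌈nγ⌉`, then for every
`α ∈ {0,1}ⁿ` with `|α| ≤ ⌈nγ⌉` and every `h` with `|ξ| > 2|h|`, the Mihlin–Hölder estimate
`|∏_{i:α_i=1}(I - τ_{h_i e_i}) m(ξ)| ≤ C' |h^{αγ}| |ξ|^{-|α|γ}` holds, with `C'`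
depending only on `C, n, γ`. -/
theorem stmt2 {n : ℕ} (γ C : ℝ) (hγ0 : 0 < γ) (hγ1 : γ ≤ 1) (hC : 0 < C)
    (m : EuclideanSpace ℝ (Fin n) → ℂ)
    (hsm : ContDiffOn ℝ ((⌈(n : ℝ) * γ⌉₊ : ℕ) : ℕ∞) m {ξ | ξ ≠ 0})
    (hder : ∀ L : List (Fin n), L.Nodup → L.length ≤ ⌈(n : ℝ) * γ⌉₊ →
      ∀ ξ : EuclideanSpace ℝ (Fin n), ξ ≠ 0 →
        ‖iterPDeriv L m ξ‖ ≤ C * ‖ξ‖ ^ (-(L.length : ℝ))) :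
    ∃ C' > 0, ∀ S : Finset (Fin n), S.card ≤ ⌈(n : ℝ) * γ⌉₊ →
      ∀ h ξ : EuclideanSpace ℝ (Fin n), 2 * ‖h‖ < ‖ξ‖ →
        ‖iterDiff h S m ξ‖ ≤
          C' * (∏ i ∈ S, |h i| ^ γ) * ‖ξ‖ ^ (-(S.card : ℝ) * γ) := by
  refine ⟨2 ^ n * C, by positivity, ?_⟩
  intro S hcard h ξ hξ
  have hh0 : 0 ≤ ‖h‖ := norm_nonneg h
  have hξ0 : 0 < ‖ξ‖ := lt_of_le_of_lt (by linarith) hξ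
  set s : ℕ := S.card with hsdef
  -- coordinatewise-close points are far from 0
  have hdist : ∀ x : EuclideanSpace ℝ (Fin n), (∀ i, |ξ i - x i| ≤ |h i|) →
      ‖ξ‖ / 2 ≤ ‖x‖ := by
    intro x hx
    have h1 : ‖ξ - x‖ ≤ ‖h‖ := by
      apply norm_le_of_coord
      intro i
      have : (ξ - x) i = ξ i - x i := by simp
      rw [this]; exact hx i
    have h2 : ‖ξ‖ - ‖x‖ ≤ ‖ξ - x‖ := norm_sub_norm_le ξ x
    linarith
  have hne : ∀ x : EuclideanSpace ℝ (Fin n), (∀ i, |ξ i - x i| ≤ |h i|) → x ≠ 0 := by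
    intro x hx h0
    have := hdist x hx
    rw [h0, norm_zero] at this
    linarith
  -- bound A
  have hA : ‖iterDiff h S m ξ‖ ≤ 2 ^ s * C := by
    calc ‖iterDiff h S m ξ‖
        ≤ ∑ T ∈ S.powerset, ‖(-1 : ℂ) ^ T.card * m (ξ - ∑ i ∈ T, h i • stdBasis i)‖ :=
          norm_sum_le _ _
      _ ≤ ∑ _T ∈ S.powerset, C := by
          apply Finset.sum_le_sum
          intro T _
          have hco : ∀ i, |ξ i - (ξ - ∑ i ∈ T, h i • stdBasis i) i| ≤ |h i| := by
            intro i
            have : (ξ - ∑ i ∈ T, h i • stdBasis i) i = ξ i - (∑ i ∈ T, h i • stdBasis i) i := by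
              simp
            rw [this, sum_coord]
            split <;> simp [abs_nonneg]
          have hb := hder [] (by simp) (by simp) _ (hne _ hco)
          simp only [List.length_nil, Nat.cast_zero, neg_zero, Real.rpow_zero, mul_one] at hb
          calc ‖(-1 : ℂ) ^ T.card * m (ξ - ∑ i ∈ T, h i • stdBasis i)‖
              = ‖m (ξ - ∑ i ∈ T, h i • stdBasis i)‖ := by
                rw [norm_mul, norm_pow, norm_neg, norm_one, one_pow, one_mul]
            _ ≤ C := hb
      _ = 2 ^ s * C := by
          rw [Finset.sum_const, Finset.card_powerset, nsmul_eq_mul]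
          push_cast
          rw [hsdef]
  -- bound B via keyB
  have hB : ‖iterDiff h S m ξ‖ ≤ (∏ i ∈ S, |h i|) * (C * (‖ξ‖ / 2) ^ (-(s : ℝ))) := by
    refine keyB h ξ hne s S rfl m (C * (‖ξ‖ / 2) ^ (-(s : ℝ))) ?_ ?_ ξ (by simp) (fun i _ => rfl)
    · exact hsm.of_le (by exact_mod_cast hcard)
    · intro L hN hTs x hx
      have hlen : L.length = s := by
        rw [← List.toFinset_card_of_nodup hN, hTs]
      have hxne := hne x hx
      have hxd := hdist x hx
      calc ‖iterPDeriv L m x‖ ≤ C * ‖x‖ ^ (-(L.length : ℝ)) :=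
            hder L hN (by rw [hlen]; exact hcard) x hxne
        _ = C * ‖x‖ ^ (-(s : ℝ)) := by rw [hlen]
        _ ≤ C * (‖ξ‖ / 2) ^ (-(s : ℝ)) := by
            apply mul_le_mul_of_nonneg_left _ hC.le
            exact Real.rpow_le_rpow_of_nonpos (by linarith) hxd (neg_nonpos.mpr (Nat.cast_nonneg s))
  -- combine
  set P : ℝ := ∏ i ∈ S, |h i| with hPdef
  have hP0 : 0 ≤ P := Finset.prod_nonneg fun i _ => abs_nonneg _
  have hsplit : (‖ξ‖ / 2) ^ (-(s : ℝ)) = ‖ξ‖ ^ (-(s : ℝ)) * 2 ^ s := by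
    rw [Real.div_rpow hξ0.le (by norm_num : (0:ℝ) ≤ 2),
      Real.rpow_neg (by norm_num : (0:ℝ) ≤ 2), div_eq_mul_inv, inv_inv, Real.rpow_natCast]
  have hB' : ‖iterDiff h S m ξ‖ ≤ (2 ^ s * C) * (P * ‖ξ‖ ^ (-(s : ℝ))) := by
    calc ‖iterDiff h S m ξ‖ ≤ P * (C * (‖ξ‖ / 2) ^ (-(s : ℝ))) := hB
      _ = (2 ^ s * C) * (P * ‖ξ‖ ^ (-(s : ℝ))) := by rw [hsplit]; ring
  have hK : (0:ℝ) < 2 ^ s * C := by positivity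
  have hQ : (0:ℝ) ≤ P * ‖ξ‖ ^ (-(s : ℝ)) := by positivity
  have hX := interp (norm_nonneg _) hK hQ hγ0 hγ1 hA hB'
  refine hX.trans ?_
  have hQγ : (P * ‖ξ‖ ^ (-(s : ℝ))) ^ γ = (∏ i ∈ S, |h i| ^ γ) * ‖ξ‖ ^ (-(s : ℝ) * γ) := by
    rw [Real.mul_rpow hP0 (by positivity), ← Real.rpow_mul hξ0.le, hPdef,
      ← Real.finset_prod_rpow S _ (fun i _ => abs_nonneg _) γ]
  rw [hQγ, ← mul_assoc]
  have hprodγ : (0:ℝ) ≤ ∏ i ∈ S, |h i| ^ γ :=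
    Finset.prod_nonneg fun i _ => Real.rpow_nonneg (abs_nonneg _) _
  have hξγ : (0:ℝ) ≤ ‖ξ‖ ^ (-(s : ℝ) * γ) := Real.rpow_nonneg hξ0.le _
  have hsn : s ≤ n := by
    rw [hsdef]
    simpa using Finset.card_le_card (Finset.subset_univ S)
  have hKle : (2:ℝ) ^ s * C ≤ 2 ^ n * C :=
    mul_le_mul_of_nonneg_right (pow_le_pow_right₀ one_le_two hsn) hC.le
  apply mul_le_mul_of_nonneg_right _ hξγ
  exact mul_le_mul_of_nonneg_right hKle hprodγ
end
end

section
/- If X is a Banach space with type t ∈ [1,2] then its dual X* has cotype t' = t/(t-1): there is a constant C such that for all finite sequences x*₁,...,x*_N ∈ X*, (Σ ‖x*_k‖^{t'})^{1/t'} ≤ C 𝔼‖Σ ε_k x*_k‖, where ε_k are independent Rademacher variables. -/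
open NormedSpace

noncomputable section

namespace Stmt17Aux
set_option linter.unusedSectionVars false
open scoped Classical
variable {N : ℕ} {E : Type*} [NormedAddCommGroup E] [NormedSpace ℝ E]

/-- flip the sign pattern `s` at the coordinates where `c` is true -/
def flip (c s : Fin N → Bool) : Fin N → Bool := fun k => xor (c k) (s k)

lemma flip_flip (c s : Fin N → Bool) : flip c (flip c s) = s := by
  funext k; cases h : c k <;> simp [flip, h]

lemma flip_bijective (c : Fin N → Bool) : Function.Bijective (flip (N := N) c) :=
  Function.Involutive.bijective (flip_flip c)

lemma sum_flip {M : Type*} [AddCommMonoid M] (c : Fin N → Bool) (f : (Fin N → Bool) → M) :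
    ∑ s : Fin N → Bool, f (flip c s) = ∑ s : Fin N → Bool, f s :=
  Fintype.sum_bijective (flip c) (flip_bijective c) _ _ (fun _ => rfl)

/-- fixed-instance indicator -/
def ind (p : Prop) : ℝ := if p then 1 else 0

lemma ind_nonneg {p : Prop} : 0 ≤ ind p := by unfold ind; split <;> norm_num
lemma ind_le_one {p : Prop} : ind p ≤ 1 := by unfold ind; split <;> norm_num
lemma ind_pos {p : Prop} (h : p) : ind p = 1 := if_pos h
lemma ind_neg {p : Prop} (h : ¬p) : ind p = 0 := if_neg h
lemma ind_congr {p q : Prop} (h : p ↔ q) : ind p = ind q := by rw [propext h]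
lemma ind_mono {p q : Prop} (h : p → q) : ind p ≤ ind q := by
  by_cases hp : p
  · rw [ind_pos hp, ind_pos (h hp)]
  · rw [ind_neg hp]; exact ind_nonneg
lemma ind_mul_ind (p q : Prop) : ind p * ind q = ind (p ∧ q) := by
  by_cases hp : p <;> by_cases hq : q
  · rw [ind_pos hp, ind_pos hq, ind_pos ⟨hp, hq⟩]; norm_num
  · rw [ind_neg hq, ind_neg (fun h : p ∧ q => hq h.2)]; ring
  · rw [ind_neg hp, ind_neg (fun h : p ∧ q => hp h.1)]; ring
  · rw [ind_neg hp, ind_neg (fun h : p ∧ q => hp h.1)]; ring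

/-- "probability" (unnormalized count, as a real number) of an event on the cube -/
def pr (p : (Fin N → Bool) → Prop) : ℝ := ∑ s : Fin N → Bool, ind (p s)

lemma pr_nonneg (p : (Fin N → Bool) → Prop) : 0 ≤ pr p :=
  Finset.sum_nonneg fun _ _ => ind_nonneg

lemma pr_le_card (p : (Fin N → Bool) → Prop) : pr p ≤ 2 ^ N := by
  have h : (2:ℝ)^N = ∑ _s : Fin N → Bool, (1:ℝ) := by simp [Finset.card_univ]
  rw [h]
  exact Finset.sum_le_sum fun s _ => ind_le_one

lemma pr_mono {p q : (Fin N → Bool) → Prop} (h : ∀ s, p s → q s) : pr p ≤ pr q :=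
  Finset.sum_le_sum fun s _ => ind_mono (h s)

lemma pr_flip (c : Fin N → Bool) (p : (Fin N → Bool) → Prop) :
    pr (fun s => p (flip c s)) = pr p :=
  sum_flip (M := ℝ) c (fun s => ind (p s))

lemma pr_or_le (p q : (Fin N → Bool) → Prop) :
    pr (fun s => p s ∨ q s) ≤ pr p + pr q := by
  unfold pr
  rw [← Finset.sum_add_distrib]
  refine Finset.sum_le_sum fun s _ => ?_
  by_cases hp : p s
  · rw [ind_pos (Or.inl hp)]
    have := ind_nonneg (p := q s); have := ind_pos hp; linarith [ind_le_one (p := q s)]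
  · by_cases hq : q s
    · rw [ind_pos (Or.inr hq), ind_neg hp, ind_pos hq]; norm_num
    · rw [ind_neg hp, ind_neg hq, ind_neg (by tauto)]; norm_num

/-- combine: coordinates `≤ j` from `a`, the rest from `b`. -/
def cmb (j : Fin N) (a b : Fin N → Bool) : Fin N → Bool := fun k => if k ≤ j then a k else b k

lemma cmb_invol (j : Fin N) (z : (Fin N → Bool) × (Fin N → Bool)) :
    (cmb j (cmb j z.1 z.2) (cmb j z.2 z.1), cmb j (cmb j z.2 z.1) (cmb j z.1 z.2)) = z := by
  obtain ⟨a, b⟩ := z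
  refine Prod.ext ?_ ?_ <;> funext k <;> by_cases h : k ≤ j <;> simp [cmb, h]

/-- Independence of events depending on low/high coordinates respectively. -/
lemma pr_mul_pr {j : Fin N} {p q : (Fin N → Bool) → Prop}
    (hp : ∀ s s', (∀ k, k ≤ j → s k = s' k) → p s → p s')
    (hq : ∀ s s', (∀ k, j < k → s k = s' k) → q s → q s') :
    pr p * pr q = 2 ^ N * pr (fun s => p s ∧ q s) := by
  have key : ∀ (a b : Fin N → Bool), (p (cmb j a b) ∧ q (cmb j a b)) ↔ (p a ∧ q b) := by
    intro a b
    have h1 : ∀ k, k ≤ j → (cmb j a b) k = a k := fun k hk => by simp [cmb, hk]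
    have h2 : ∀ k, j < k → (cmb j a b) k = b k := fun k hk => by simp [cmb, not_le.2 hk]
    constructor
    · rintro ⟨hpp, hqq⟩
      exact ⟨hp _ _ (fun k hk => (h1 k hk)) hpp, hq _ _ (fun k hk => (h2 k hk)) hqq⟩
    · rintro ⟨hpp, hqq⟩
      exact ⟨hp _ _ (fun k hk => (h1 k hk).symm) hpp, hq _ _ (fun k hk => (h2 k hk).symm) hqq⟩
  have hbij : Function.Bijective
      (fun z : (Fin N → Bool) × (Fin N → Bool) => (cmb j z.1 z.2, cmb j z.2 z.1)) :=
    Function.Involutive.bijective (cmb_invol j)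
  calc pr p * pr q
      = ∑ z : (Fin N → Bool) × (Fin N → Bool), ind (p z.1) * ind (q z.2) := by
        rw [pr, pr, Finset.sum_mul_sum]
        exact (Fintype.sum_prod_type (fun z : (Fin N → Bool) × (Fin N → Bool) =>
          ind (p z.1) * ind (q z.2))).symm
    _ = ∑ z : (Fin N → Bool) × (Fin N → Bool),
          ind (p (cmb j z.1 z.2) ∧ q (cmb j z.1 z.2)) := by
        refine Fintype.sum_congr _ _ fun z => ?_
        rw [ind_mul_ind, ind_congr (key z.1 z.2)]
    _ = ∑ z : (Fin N → Bool) × (Fin N → Bool), ind (p z.1 ∧ q z.1) :=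
        Fintype.sum_bijective _ hbij
          (fun z => ind (p (cmb j z.1 z.2) ∧ q (cmb j z.1 z.2)))
          (fun z => ind (p z.1 ∧ q z.1))
          (fun z => rfl)
    _ = 2 ^ N * pr (fun s => p s ∧ q s) := by
        rw [Fintype.sum_prod_type]
        have h2N : ∀ a : Fin N → Bool,
            (∑ _b : Fin N → Bool, ind (p a ∧ q a)) = 2 ^ N * ind (p a ∧ q a) := fun a => by
          rw [Finset.sum_const, Finset.card_univ, nsmul_eq_mul]
          norm_num
        rw [Finset.sum_congr rfl (fun a _ => h2N a), ← Finset.mul_sum, pr]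

def rsum (y : Fin N → E) (A : Finset (Fin N)) (s : Fin N → Bool) : E :=
  ∑ k ∈ A, (if s k then y k else -y k)

def S (y : Fin N → E) (s : Fin N → Bool) : E := rsum y Finset.univ s
def PS (y : Fin N → E) (j : Fin N) (s : Fin N → Bool) : E :=
  rsum y (Finset.univ.filter (· ≤ j)) s
def TS (y : Fin N → E) (j : Fin N) (s : Fin N → Bool) : E :=
  rsum y (Finset.univ.filter (fun k => j < k)) s

lemma PS_add_TS (y : Fin N → E) (j : Fin N) (s : Fin N → Bool) :
    PS y j s + TS y j s = S y s := by
  unfold PS TS S rsum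
  rw [← Finset.sum_filter_add_sum_filter_not Finset.univ (· ≤ j)]
  congr 1
  exact Finset.sum_congr (by ext k; simp [not_le]) (fun _ _ => rfl)

lemma norm_S_le (y : Fin N → E) (s : Fin N → Bool) : ‖S y s‖ ≤ ∑ k, ‖y k‖ := by
  unfold S rsum
  refine (norm_sum_le Finset.univ (fun k => if s k then y k else -y k)).trans
    (Finset.sum_le_sum fun k _ => ?_)
  split <;> simp

lemma rsum_congr (y : Fin N → E) (A : Finset (Fin N)) {s s' : Fin N → Bool}
    (h : ∀ k ∈ A, s k = s' k) : rsum y A s = rsum y A s' :=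
  Finset.sum_congr rfl fun k hk => by rw [h k hk]

lemma PS_congr (y : Fin N → E) {i j : Fin N} (hij : i ≤ j) {s s' : Fin N → Bool}
    (h : ∀ k, k ≤ j → s k = s' k) : PS y i s = PS y i s' :=
  rsum_congr y _ fun k hk => h k ((Finset.mem_filter.1 hk).2.trans hij)

lemma TS_congr (y : Fin N → E) {j : Fin N} {s s' : Fin N → Bool}
    (h : ∀ k, j < k → s k = s' k) : TS y j s = TS y j s' :=
  rsum_congr y _ fun k hk => h k (Finset.mem_filter.1 hk).2

lemma flip_eq_of_false {c s : Fin N → Bool} {k : Fin N} (h : c k = false) :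
    flip c s k = s k := by simp [flip, h]

lemma rsum_flip_add (y : Fin N → E) (c s : Fin N → Bool) (A : Finset (Fin N)) :
    rsum y A (flip c s) + rsum y A s =
      rsum y (A.filter fun k => c k = false) s + rsum y (A.filter fun k => c k = false) s := by
  unfold rsum
  rw [← Finset.sum_add_distrib, ← Finset.sum_add_distrib, Finset.sum_filter]
  refine Finset.sum_congr rfl fun k _ => ?_
  cases hc : c k <;> cases hs : s k <;> simp [flip, hc, hs]

lemma S_flip_gt (y : Fin N → E) (j : Fin N) (s : Fin N → Bool) :
    S y (flip (fun k => decide (j < k)) s) + S y s = PS y j s + PS y j s := by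
  have := rsum_flip_add y (fun k => decide (j < k)) s Finset.univ
  unfold S PS
  rw [this]
  congr 2 <;> (ext k; simp [decide_eq_false_iff_not, not_lt])

lemma S_flip_le (y : Fin N → E) (j : Fin N) (s : Fin N → Bool) :
    S y (flip (fun k => decide (k ≤ j)) s) + S y s = TS y j s + TS y j s := by
  have := rsum_flip_add y (fun k => decide (k ≤ j)) s Finset.univ
  unfold S TS
  rw [this]
  congr 2 <;> (ext k; simp [decide_eq_false_iff_not, not_le])

lemma PS_flip_gt (y : Fin N → E) {i j : Fin N} (hij : i ≤ j) (s : Fin N → Bool) :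
    PS y i (flip (fun k => decide (j < k)) s) = PS y i s :=
  PS_congr y hij fun k hk => flip_eq_of_false (by simp [hk])

lemma TS_flip_le (y : Fin N → E) (j : Fin N) (s : Fin N → Bool) :
    TS y j (flip (fun k => decide (k ≤ j)) s) = TS y j s :=
  TS_congr y fun k hk => flip_eq_of_false (by simp only [decide_eq_false_iff_not]; exact not_le.2 hk)

/-- doubling trick: if `u < ‖half‖` where `half + half = a + b` then `u < ‖a‖ ∨ u < ‖b‖`. -/
lemma lt_norm_or {u : ℝ} {half a b : E} (hsum : a + b = half + half) (h : u < ‖half‖) :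
    u < ‖a‖ ∨ u < ‖b‖ := by
  by_contra hcon
  push_neg at hcon
  have : ‖half + half‖ ≤ ‖a‖ + ‖b‖ := hsum ▸ norm_add_le a b
  have h2 : ‖half + half‖ = 2 * ‖half‖ := by
    have : half + half = (2:ℝ) • half := by rw [two_smul]
    rw [this, norm_smul]; norm_num
  linarith



/-! ### Lévy-type inequalities -/

/-- the event that `j` is the first index where the partial sum exceeds `u` -/
def Aj (y : Fin N → E) (u : ℝ) (j : Fin N) (s : Fin N → Bool) : Prop :=
  u < ‖PS y j s‖ ∧ ∀ i, i < j → ‖PS y i s‖ ≤ u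

lemma exists_Aj {y : Fin N → E} {u : ℝ} {s : Fin N → Bool}
    (h : ∃ j, u < ‖PS y j s‖) : ∃ j, Aj y u j s := by
  classical
  obtain ⟨j₀, hj₀⟩ := h
  set F : Finset (Fin N) := Finset.univ.filter (fun j => u < ‖PS y j s‖) with hF
  have hne : F.Nonempty := ⟨j₀, by simp [hF, hj₀]⟩
  refine ⟨F.min' hne, ?_, ?_⟩
  · have := F.min'_mem hne
    simp only [hF, Finset.mem_filter] at this
    exact this.2
  · intro i hi
    by_contra hcon
    push_neg at hcon
    have hiF : i ∈ F := by simp [hF, hcon]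
    exact absurd (F.min'_le i hiF) (not_le.2 hi)

lemma Aj_flip_gt {y : Fin N → E} {u : ℝ} {j : Fin N} {s : Fin N → Bool}
    (h : Aj y u j s) : Aj y u j (flip (fun k => decide (j < k)) s) := by
  obtain ⟨h1, h2⟩ := h
  constructor
  · rwa [PS_flip_gt y le_rfl]
  · intro i hi
    rw [PS_flip_gt y (le_of_lt hi)]
    exact h2 i hi

lemma pr_Aj_le {y : Fin N → E} {u : ℝ} (j : Fin N) :
    pr (Aj y u j) ≤ 2 * pr (fun s => Aj y u j s ∧ u < ‖S y s‖) := by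
  have step : ∀ s, Aj y u j s →
      ((fun s => Aj y u j s ∧ u < ‖S y s‖) s ∨
        (fun s => Aj y u j s ∧ u < ‖S y s‖) (flip (fun k => decide (j < k)) s)) := by
    intro s hs
    rcases lt_norm_or (S_flip_gt y j s) hs.1 with h | h
    · exact Or.inr ⟨Aj_flip_gt hs, h⟩
    · exact Or.inl ⟨hs, h⟩
  calc pr (Aj y u j) ≤ pr (fun s => (Aj y u j s ∧ u < ‖S y s‖) ∨
        (Aj y u j (flip (fun k => decide (j < k)) s) ∧
          u < ‖S y (flip (fun k => decide (j < k)) s)‖)) := pr_mono step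
    _ ≤ pr (fun s => Aj y u j s ∧ u < ‖S y s‖) +
        pr (fun s => (fun s' => Aj y u j s' ∧ u < ‖S y s'‖) (flip (fun k => decide (j < k)) s)) :=
      pr_or_le _ _
    _ = 2 * pr (fun s => Aj y u j s ∧ u < ‖S y s‖) := by
      rw [pr_flip (fun k => decide (j < k)) (fun s' => Aj y u j s' ∧ u < ‖S y s'‖)]; ring

lemma sum_pr_Aj_and_le {y : Fin N → E} {u : ℝ} (X : (Fin N → Bool) → Prop) :
    ∑ j : Fin N, pr (fun s => Aj y u j s ∧ X s) ≤ pr X := by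
  unfold pr
  rw [Finset.sum_comm]
  refine Finset.sum_le_sum fun s _ => ?_
  by_cases hex : ∃ j, Aj y u j s ∧ X s
  · obtain ⟨j₀, hj₀⟩ := hex
    have huniq : ∀ j, Aj y u j s → j = j₀ := by
      intro j hj
      rcases lt_trichotomy j j₀ with h | h | h
      · exact absurd (hj₀.1.2 j h) (not_le.2 hj.1)
      · exact h
      · exact absurd (hj.2 j₀ h) (not_le.2 hj₀.1.1)
    calc ∑ j : Fin N, ind (Aj y u j s ∧ X s)
        ≤ ∑ j : Fin N, ind (j = j₀) := Finset.sum_le_sum fun j _ =>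
          ind_mono fun hj => huniq j hj.1
      _ = 1 := by
          rw [Finset.sum_eq_single j₀ (fun b _ hb => ind_neg hb) (by simp)]
          exact ind_pos rfl
      _ = ind (X s) := (ind_pos hj₀.2).symm
  · push_neg at hex
    have hz : ∀ j : Fin N, ind (Aj y u j s ∧ X s) = 0 := fun j =>
      ind_neg (fun hc => (hex j hc.1) hc.2)
    rw [Finset.sum_congr rfl (fun j _ => hz j), Finset.sum_const, smul_zero]
    exact ind_nonneg

lemma sum_pr_Aj_le {y : Fin N → E} {u : ℝ} :
    ∑ j : Fin N, pr (Aj y u j) ≤ 2 * pr (fun s => u < ‖S y s‖) := by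
  calc ∑ j : Fin N, pr (Aj y u j)
      ≤ ∑ j : Fin N, 2 * pr (fun s => Aj y u j s ∧ u < ‖S y s‖) :=
        Finset.sum_le_sum fun j _ => pr_Aj_le j
    _ = 2 * ∑ j : Fin N, pr (fun s => Aj y u j s ∧ u < ‖S y s‖) := by
        rw [Finset.mul_sum]
    _ ≤ 2 * pr (fun s => u < ‖S y s‖) := by
        have := sum_pr_Aj_and_le (y := y) (u := u) (fun s => u < ‖S y s‖)
        linarith

lemma pr_TS_le {y : Fin N → E} {u : ℝ} (j : Fin N) :
    pr (fun s => u < ‖TS y j s‖) ≤ 2 * pr (fun s => u < ‖S y s‖) := by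
  have step : ∀ s, u < ‖TS y j s‖ →
      (u < ‖S y s‖ ∨ u < ‖S y (flip (fun k => decide (k ≤ j)) s)‖) := by
    intro s hs
    rcases lt_norm_or (S_flip_le y j s) hs with h | h
    · exact Or.inr h
    · exact Or.inl h
  calc pr (fun s => u < ‖TS y j s‖)
      ≤ pr (fun s => u < ‖S y s‖ ∨ u < ‖S y (flip (fun k => decide (k ≤ j)) s)‖) := pr_mono step
    _ ≤ pr (fun s => u < ‖S y s‖) +
        pr (fun s => (fun s' => u < ‖S y s'‖) (flip (fun k => decide (k ≤ j)) s)) := pr_or_le _ _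
    _ = 2 * pr (fun s => u < ‖S y s‖) := by
      rw [pr_flip (fun k => decide (k ≤ j)) (fun s' => u < ‖S y s'‖)]; ring


/-! ### Markov, doubling, Kahane -/

lemma markov (y : Fin N → E) {u : ℝ} :
    pr (fun s => u < ‖S y s‖) * u ≤ ∑ s : Fin N → Bool, ‖S y s‖ := by
  rw [pr, Finset.sum_mul]
  refine Finset.sum_le_sum fun s _ => ?_
  by_cases h : u < ‖S y s‖
  · rw [ind_pos h, one_mul]; exact le_of_lt h
  · rw [ind_neg h, zero_mul]; positivity

lemma norm_PS_le_of_Aj {y : Fin N → E} {u M' : ℝ} (hu : 0 ≤ u) (hM : ∀ k, ‖y k‖ ≤ M')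
    {j : Fin N} {s : Fin N → Bool} (h : Aj y u j s) : ‖PS y j s‖ ≤ u + M' := by
  classical
  have hsplit : Finset.univ.filter (· ≤ j) = insert j (Finset.univ.filter (· < j)) := by
    ext k; simp [le_iff_lt_or_eq, or_comm]
  have hnotmem : j ∉ Finset.univ.filter (· < j) := by simp
  have hPS : PS y j s = (if s j then y j else -y j) + rsum y (Finset.univ.filter (· < j)) s := by
    unfold PS rsum
    rw [hsplit, Finset.sum_insert hnotmem]
  have hterm : ‖if s j then y j else -y j‖ ≤ M' := by
    cases hs : s j <;> simp [hM j]
  have hrest : ‖rsum y (Finset.univ.filter (· < j)) s‖ ≤ u := by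
    by_cases hj0 : j.val = 0
    · have : Finset.univ.filter (· < j) = (∅ : Finset (Fin N)) := by
        ext k; simp [Fin.lt_def, hj0]
      rw [this]
      simp [rsum, hu]
    · have hjpos : 0 < j.val := Nat.pos_of_ne_zero hj0
      let i : Fin N := ⟨j.val - 1, lt_of_le_of_lt (Nat.sub_le _ _) j.isLt⟩
      have hij : i < j := by
        simp only [Fin.lt_def]
        exact Nat.sub_lt hjpos one_pos
      have hfe : Finset.univ.filter (· < j) = Finset.univ.filter (· ≤ i) := by
        ext k
        simp only [Finset.mem_filter, Finset.mem_univ, true_and, Fin.lt_def, Fin.le_def]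
        show k.val < j.val ↔ k.val ≤ j.val - 1
        omega
      rw [hfe]
      exact h.2 i hij
  calc ‖PS y j s‖ ≤ ‖if s j then y j else -y j‖ + ‖rsum y (Finset.univ.filter (· < j)) s‖ := by
        rw [hPS]; exact norm_add_le _ _
    _ ≤ M' + u := add_le_add hterm hrest
    _ = u + M' := by ring

lemma doubling {y : Fin N → E} {u M' : ℝ} (hu : 0 ≤ u) (hM0 : 0 ≤ M')
    (hM : ∀ k, ‖y k‖ ≤ M') :
    pr (fun s => 2*u + M' < ‖S y s‖) * 2 ^ N ≤ 4 * pr (fun s => u < ‖S y s‖) ^ 2 := by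
  have h2N : (0:ℝ) < 2 ^ N := by positivity
  have hprX : 0 ≤ pr (fun s => u < ‖S y s‖) := pr_nonneg _
  -- Step 0: pointwise inclusion
  have step0 : ∀ s, 2*u + M' < ‖S y s‖ → ∃ j, Aj y u j s ∧ u < ‖TS y j s‖ := by
    intro s hs
    have hN : N ≠ 0 := by
      rintro rfl
      have hS0 : S y s = 0 := by simp [S, rsum]
      rw [hS0, norm_zero] at hs
      linarith
    have hlast : ∃ j, u < ‖PS y j s‖ := by
      refine ⟨⟨N-1, Nat.sub_lt (Nat.pos_of_ne_zero hN) one_pos⟩, ?_⟩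
      have : Finset.univ.filter (· ≤ (⟨N-1, Nat.sub_lt (Nat.pos_of_ne_zero hN) one_pos⟩ : Fin N))
          = Finset.univ := by
        ext k
        simp only [Finset.mem_filter, Finset.mem_univ, true_and, Fin.le_def, iff_true]
        exact Nat.le_sub_one_of_lt k.isLt
      unfold PS
      rw [this]
      show u < ‖S y s‖
      linarith
    obtain ⟨j, hj⟩ := exists_Aj hlast
    refine ⟨j, hj, ?_⟩
    have h1 : ‖PS y j s‖ ≤ u + M' := norm_PS_le_of_Aj hu hM hj
    have h2 : TS y j s = S y s - PS y j s := eq_sub_of_add_eq' (PS_add_TS y j s)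
    rw [h2]
    have h3 := norm_sub_norm_le (S y s) (PS y j s)
    linarith
  -- union bound over the first crossing index
  have hunion : pr (fun s => 2*u + M' < ‖S y s‖) ≤
      ∑ j : Fin N, pr (fun s => Aj y u j s ∧ u < ‖TS y j s‖) := by
    unfold pr
    rw [Finset.sum_comm]
    refine Finset.sum_le_sum fun s _ => ?_
    by_cases hs : 2*u + M' < ‖S y s‖
    · obtain ⟨j, hj⟩ := step0 s hs
      rw [ind_pos hs]
      refine le_trans ?_ (Finset.single_le_sum (f := fun j => ind (Aj y u j s ∧ u < ‖TS y j s‖))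
        (fun i _ => ind_nonneg) (Finset.mem_univ j))
      exact le_of_eq (ind_pos hj).symm
    · rw [ind_neg hs]
      exact Finset.sum_nonneg fun j _ => ind_nonneg
  -- independence factorization for each j
  have hfact : ∀ j : Fin N, pr (fun s => Aj y u j s ∧ u < ‖TS y j s‖) =
      pr (Aj y u j) * pr (fun s => u < ‖TS y j s‖) / 2 ^ N := by
    intro j
    have hp : ∀ s s', (∀ k, k ≤ j → s k = s' k) → Aj y u j s → Aj y u j s' := by
      intro s s' hag ⟨ha, hb⟩
      constructor
      · rwa [← PS_congr y le_rfl hag]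
      · intro i hi
        rw [← PS_congr y (le_of_lt hi) hag]
        exact hb i hi
    have hq : ∀ s s', (∀ k, j < k → s k = s' k) → u < ‖TS y j s‖ → u < ‖TS y j s'‖ := by
      intro s s' hag h
      rwa [← TS_congr y hag]
    have := pr_mul_pr hp hq
    rw [this]
    field_simp
  calc pr (fun s => 2*u + M' < ‖S y s‖) * 2 ^ N
      ≤ (∑ j : Fin N, pr (fun s => Aj y u j s ∧ u < ‖TS y j s‖)) * 2 ^ N := by
        exact mul_le_mul_of_nonneg_right hunion h2N.le
    _ = ∑ j : Fin N, pr (Aj y u j) * pr (fun s => u < ‖TS y j s‖) := by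
        rw [Finset.sum_mul]
        refine Finset.sum_congr rfl fun j _ => ?_
        rw [hfact j]
        field_simp
    _ ≤ ∑ j : Fin N, pr (Aj y u j) * (2 * pr (fun s => u < ‖S y s‖)) :=
        Finset.sum_le_sum fun j _ =>
          mul_le_mul_of_nonneg_left (pr_TS_le j) (pr_nonneg _)
    _ = (∑ j : Fin N, pr (Aj y u j)) * (2 * pr (fun s => u < ‖S y s‖)) := by
        rw [Finset.sum_mul]
    _ ≤ (2 * pr (fun s => u < ‖S y s‖)) * (2 * pr (fun s => u < ‖S y s‖)) := by
        refine mul_le_mul_of_nonneg_right sum_pr_Aj_le (by positivity)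
    _ = 4 * pr (fun s => u < ‖S y s‖) ^ 2 := by ring


lemma norm_coord_le (y : Fin N → E) (k : Fin N) :
    ‖y k‖ * 2 ^ N ≤ ∑ s : Fin N → Bool, ‖S y s‖ := by
  classical
  have expand : ∀ s : Fin N → Bool, (if s k then S y s else -S y s) =
      ∑ j : Fin N, (if s k then (if s j then y j else -y j) else -(if s j then y j else -y j)) := by
    intro s
    cases h : s k <;> simp [S, rsum, h]
  have key : ∑ s : Fin N → Bool, (if s k then S y s else -S y s) = (2^N : ℝ) • y k := by
    rw [Finset.sum_congr rfl (fun s _ => expand s), Finset.sum_comm]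
    have hjk : ∀ j : Fin N, j ≠ k →
        (∑ s : Fin N → Bool,
          (if s k then (if s j then y j else -y j) else -(if s j then y j else -y j))) = 0 := by
      intro j hjk
      set f : (Fin N → Bool) → E := fun s =>
        (if s k then (if s j then y j else -y j) else -(if s j then y j else -y j)) with hf
      have hflip := sum_flip (M := E) (fun i => decide (i = j)) f
      have hneg : ∀ s, f (flip (fun i => decide (i = j)) s) = - f s := by
        intro s
        have hk : flip (fun i => decide (i = j)) s k = s k := by
          simp [flip, Ne.symm hjk]
        have hj : flip (fun i => decide (i = j)) s j = !(s j) := by simp [flip]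
        cases hsk : s k <;> cases hsj : s j <;> simp [hf, hk, hj, hsk, hsj]
      rw [Finset.sum_congr rfl (fun s _ => hneg s), Finset.sum_neg_distrib] at hflip
      have h2 : (2:ℝ) • (∑ s : Fin N → Bool, f s) = 0 := by
        rw [two_smul]
        nth_rewrite 1 [← hflip]
        simp
      rcases smul_eq_zero.1 h2 with h0 | h0
      · norm_num at h0
      · exact h0
    have hkk : (∑ s : Fin N → Bool,
        (if s k then (if s k then y k else -y k) else -(if s k then y k else -y k))) =
          (2^N : ℝ) • y k := by
      have hconst : ∀ s : Fin N → Bool,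
          (if s k then (if s k then y k else -y k) else -(if s k then y k else -y k)) = y k := by
        intro s; cases h : s k <;> simp [h]
      rw [Finset.sum_congr rfl (fun s _ => hconst s), Finset.sum_const, Finset.card_univ]
      rw [← Nat.cast_smul_eq_nsmul ℝ]
      congr 1
      simp
    rw [Finset.sum_eq_single k (fun j _ hj => hjk j hj) (by simp)]
    exact hkk
  have hnorm : ‖(2^N : ℝ) • y k‖ ≤ ∑ s : Fin N → Bool, ‖S y s‖ := by
    rw [← key]
    refine (norm_sum_le _ _).trans (Finset.sum_le_sum fun s _ => ?_)
    cases h : s k <;> simp [h]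
  rw [norm_smul] at hnorm
  calc ‖y k‖ * 2^N = |(2:ℝ)^N| * ‖y k‖ := by rw [abs_of_pos (by positivity)]; ring
    _ ≤ _ := hnorm

lemma three_mul_le : ∀ n : ℕ, 3*n ≤ 2^n + 2
  | 0 => by norm_num
  | 1 => by norm_num
  | (n+2) => by
      have ih := three_mul_le (n+1)
      have h2 : 2 ≤ 2^(n+1) := Nat.one_lt_two_pow_iff.2 (by omega)
      have heq : 2^(n+2) = 2 * 2^(n+1) := by ring
      omega

lemma pow_tail_bound (n : ℕ) : (4:ℝ)^n * (1/2)^(2^n) ≤ 4 * (1/2)^n := by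
  have key : (2:ℕ)^(3*n) ≤ 2^(2^n + 2) := Nat.pow_le_pow_right (by norm_num) (three_mul_le n)
  have keyR : (2:ℝ)^(3*n) ≤ 2^(2^n + 2) := by exact_mod_cast key
  have h1 : (4:ℝ)^n = 2^(2*n) := by rw [pow_mul]; norm_num
  have h2 : ((1:ℝ)/2)^(2^n) = 1/2^(2^n) := by rw [div_pow]; norm_num
  have h3 : ((1:ℝ)/2)^n = 1/2^n := by rw [div_pow]; norm_num
  rw [h1, h2, h3, mul_one_div, mul_one_div,
    div_le_div_iff₀ (by positivity) (by positivity)]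
  calc (2:ℝ)^(2*n) * 2^n = 2^(3*n) := by rw [← pow_add]; congr 1; omega
    _ ≤ 2^(2^n + 2) := keyR
    _ = 4 * 2^(2^n) := by rw [pow_add]; ring


lemma kahane (y : Fin N → E) :
    ∑ s : Fin N → Bool, ‖S y s‖^2 ≤
      1024 * ((∑ s : Fin N → Bool, ‖S y s‖) / 2^N)^2 * 2^N := by
  have h2N : (0:ℝ) < 2^N := by positivity
  set M : ℝ := (∑ s : Fin N → Bool, ‖S y s‖) / 2^N with hMdef
  have hsum_nonneg : 0 ≤ ∑ s : Fin N → Bool, ‖S y s‖ :=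
    Finset.sum_nonneg fun s _ => norm_nonneg _
  have hM0 : 0 ≤ M := div_nonneg hsum_nonneg h2N.le
  have hSsum : ∑ s : Fin N → Bool, ‖S y s‖ = M * 2^N := by
    rw [hMdef]; field_simp
  have hMk : ∀ k, ‖y k‖ ≤ M := by
    intro k
    have h := norm_coord_le y k
    rw [hSsum] at h
    exact le_of_mul_le_mul_right h h2N
  -- tail estimates by induction
  have tail : ∀ n : ℕ, pr (fun s => (9*2^n - 1 : ℝ)*M < ‖S y s‖) ≤
      2^N * ((1/4) * (1/2)^(2^n)) := by
    intro n
    induction n with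
    | zero =>
      rcases eq_or_lt_of_le hM0 with hMz | hMpos
      · have hzero : ∑ s : Fin N → Bool, ‖S y s‖ = 0 := by rw [hSsum, ← hMz, zero_mul]
        have hz : ∀ s : Fin N → Bool, ‖S y s‖ = 0 := fun s =>
          (Finset.sum_eq_zero_iff_of_nonneg (fun s _ => norm_nonneg (S y s))).1 hzero s
            (Finset.mem_univ s)
        have hpr : pr (fun s => (9*2^0 - 1 : ℝ)*M < ‖S y s‖) = 0 := by
          unfold pr
          refine Finset.sum_eq_zero fun s _ => ind_neg ?_
          show ¬((9*2^0 - 1 : ℝ)*M < ‖S y s‖)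
          rw [hz s, ← hMz]
          norm_num
        rw [hpr]
        positivity
      · have hmk := markov y (u := (9*2^0 - 1 : ℝ)*M)
        rw [hSsum] at hmk
        have h8 : (0:ℝ) < (9*2^0 - 1 : ℝ)*M := by norm_num; linarith
        have hple : pr (fun s => (9*2^0 - 1 : ℝ)*M < ‖S y s‖) ≤
            M * 2^N / ((9*2^0 - 1 : ℝ)*M) := by
          rw [le_div_iff₀ h8]
          exact hmk
        refine hple.trans (le_of_eq ?_)
        have hMne : M ≠ 0 := ne_of_gt hMpos
        rw [show ((9:ℝ)*2^0 - 1) = 8 by norm_num,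
          show ((1:ℝ)/4 * (1/2)^(2^0)) = 1/8 by norm_num]
        field_simp
    | succ n ih =>
      have h1pow : (1:ℝ) ≤ 2^n := one_le_pow₀ (by norm_num)
      have hu : (0:ℝ) ≤ (9*2^n - 1)*M := mul_nonneg (by linarith) hM0
      have hd := doubling (y := y) (u := (9*2^n - 1)*M) (M' := M) hu hM0 hMk
      have hb : 2*((9*2^n - 1 : ℝ)*M) + M = (9*2^(n+1) - 1)*M := by
        rw [pow_succ]; ring
      rw [hb] at hd
      have hsq : pr (fun s => (9*2^n - 1 : ℝ)*M < ‖S y s‖)^2 ≤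
          (2^N * ((1/4) * (1/2)^(2^n)))^2 := by
        exact pow_le_pow_left₀ (pr_nonneg _) ih 2
      have hfin : pr (fun s => (9*2^(n+1) - 1 : ℝ)*M < ‖S y s‖) * 2^N ≤
          4 * (2^N * ((1/4) * (1/2)^(2^n)))^2 := by linarith
      rw [← mul_le_mul_iff_of_pos_right h2N]
      refine hfin.trans (le_of_eq ?_)
      have hp2 : ((1:ℝ)/2)^(2^(n+1)) = (((1:ℝ)/2)^(2^n))^2 := by
        rw [pow_succ, pow_mul]
      rw [hp2]
      ring
  -- pointwise bound on each ‖S y s‖²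
  have hterm_nonneg : ∀ (s : Fin N → Bool) (n : ℕ), (0:ℝ) ≤
      ((9*2^(n+1) - 1)*M)^2 * ind ((9*2^n - 1 : ℝ)*M < ‖S y s‖) :=
    fun s n => mul_nonneg (sq_nonneg _) ind_nonneg
  have hpoint : ∀ s : Fin N → Bool, ‖S y s‖^2 ≤ ((9*2^1 - 1 : ℝ)*M)^2 +
      ∑ n ∈ Finset.Icc 1 N, ((9*2^(n+1) - 1)*M)^2 * ind ((9*2^n - 1 : ℝ)*M < ‖S y s‖) := by
    intro s
    have hsum0 : (0:ℝ) ≤ ∑ n ∈ Finset.Icc 1 N,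
        ((9*2^(n+1) - 1)*M)^2 * ind ((9*2^n - 1 : ℝ)*M < ‖S y s‖) :=
      Finset.sum_nonneg fun n _ => hterm_nonneg s n
    by_cases h1 : ‖S y s‖ ≤ (9*2^1 - 1 : ℝ)*M
    · have h2 : ‖S y s‖^2 ≤ ((9*2^1 - 1 : ℝ)*M)^2 := pow_le_pow_left₀ (norm_nonneg _) h1 2
      linarith
    · push_neg at h1
      have hN : 1 ≤ N := by
        by_contra hc
        have hN0 : N = 0 := by omega
        subst hN0
        have hS0 : S y s = 0 := by simp [S, rsum]
        rw [hS0, norm_zero] at h1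
        have : (0:ℝ) ≤ (9*2^1 - 1 : ℝ)*M := by
          have : (0:ℝ) ≤ (17:ℝ)*M := by linarith
          norm_num
          linarith
        linarith
      set Fs := (Finset.Icc 1 N).filter (fun n => (9*2^n - 1 : ℝ)*M < ‖S y s‖) with hFs
      have h1mem : 1 ∈ Fs := by
        rw [hFs, Finset.mem_filter, Finset.mem_Icc]
        exact ⟨⟨le_refl 1, hN⟩, h1⟩
      have hne : Fs.Nonempty := ⟨1, h1mem⟩
      have hn0mem := Fs.max'_mem hne
      set n₀ := Fs.max' hne with hn0
      rw [hFs, Finset.mem_filter, Finset.mem_Icc] at hn0mem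
      obtain ⟨⟨hn01, hn0N⟩, hn0lt⟩ := hn0mem
      have hup : ‖S y s‖ ≤ (9*2^(n₀+1) - 1 : ℝ)*M := by
        by_cases hcase : n₀ = N
        · exfalso
          have hb1 : ‖S y s‖ ≤ (N:ℝ) * M := by
            refine (norm_S_le y s).trans ?_
            calc ∑ k, ‖y k‖ ≤ ∑ _k : Fin N, M := Finset.sum_le_sum fun k _ => hMk k
              _ = N * M := by
                  rw [Finset.sum_const, Finset.card_univ, Fintype.card_fin, nsmul_eq_mul]
          have hcast : (N:ℝ) ≤ 9*2^N - 1 := by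
            have h2 : N < 2^N := Nat.lt_two_pow_self
            have h2R : (N:ℝ) < 2^N := by exact_mod_cast h2
            have h1' : (1:ℝ) ≤ 2^N := one_le_pow₀ (by norm_num)
            linarith
          have hmm := mul_le_mul_of_nonneg_right hcast hM0
          rw [hcase] at hn0lt
          linarith
        · have hnot : n₀ + 1 ∉ Fs := fun hmem => by
            have := Fs.le_max' _ hmem
            omega
          rw [hFs, Finset.mem_filter, Finset.mem_Icc] at hnot
          push_neg at hnot
          exact hnot ⟨by omega, by omega⟩
      have hS2 : ‖S y s‖^2 ≤ ((9*2^(n₀+1) - 1 : ℝ)*M)^2 :=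
        pow_le_pow_left₀ (norm_nonneg _) hup 2
      have hin : ((9*2^(n₀+1) - 1 : ℝ)*M)^2 * ind ((9*2^n₀ - 1 : ℝ)*M < ‖S y s‖) =
          ((9*2^(n₀+1) - 1 : ℝ)*M)^2 := by rw [ind_pos hn0lt, mul_one]
      have hsingle := Finset.single_le_sum
        (f := fun n => ((9*2^(n+1) - 1)*M)^2 * ind ((9*2^n - 1 : ℝ)*M < ‖S y s‖))
        (fun n _ => hterm_nonneg s n) (Finset.mem_Icc.2 ⟨hn01, hn0N⟩)
      have hsingle' : ((9*2^(n₀+1) - 1 : ℝ)*M)^2 ≤ ∑ n ∈ Finset.Icc 1 N,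
          ((9*2^(n+1) - 1)*M)^2 * ind ((9*2^n - 1 : ℝ)*M < ‖S y s‖) := by
        rw [← hin]
        exact hsingle
      have hsq0 : (0:ℝ) ≤ ((9*2^1 - 1 : ℝ)*M)^2 := sq_nonneg _
      linarith
  -- sum the pointwise bound
  have hfin1 : ∑ s : Fin N → Bool, ‖S y s‖^2 ≤
      2^N * ((9*2^1 - 1 : ℝ)*M)^2 + ∑ n ∈ Finset.Icc 1 N,
        ((9*2^(n+1) - 1)*M)^2 * pr (fun s => (9*2^n - 1 : ℝ)*M < ‖S y s‖) := by
    calc ∑ s : Fin N → Bool, ‖S y s‖^2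
        ≤ ∑ s : Fin N → Bool, (((9*2^1 - 1 : ℝ)*M)^2 +
          ∑ n ∈ Finset.Icc 1 N, ((9*2^(n+1) - 1)*M)^2 * ind ((9*2^n - 1 : ℝ)*M < ‖S y s‖)) :=
          Finset.sum_le_sum fun s _ => hpoint s
      _ = 2^N * ((9*2^1 - 1 : ℝ)*M)^2 + ∑ n ∈ Finset.Icc 1 N,
          ((9*2^(n+1) - 1)*M)^2 * pr (fun s => (9*2^n - 1 : ℝ)*M < ‖S y s‖) := by
          rw [Finset.sum_add_distrib, Finset.sum_const, Finset.card_univ]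
          congr 1
          · rw [nsmul_eq_mul]
            congr 1
            simp
          · rw [Finset.sum_comm]
            refine Finset.sum_congr rfl fun n _ => ?_
            rw [pr, Finset.mul_sum]
  have hfin2 : ∑ n ∈ Finset.Icc 1 N,
      ((9*2^(n+1) - 1)*M)^2 * pr (fun s => (9*2^n - 1 : ℝ)*M < ‖S y s‖) ≤
      ∑ n ∈ Finset.Icc 1 N, 2^N * M^2 * (324 * (1/2)^n) := by
    refine Finset.sum_le_sum fun n _ => ?_
    have h1pow : (1:ℝ) ≤ 2^(n+1) := one_le_pow₀ (by norm_num)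
    have hfc : (0:ℝ) ≤ (9*2^(n+1) - 1)*M := mul_nonneg (by linarith) hM0
    calc ((9*2^(n+1) - 1)*M)^2 * pr (fun s => (9*2^n - 1 : ℝ)*M < ‖S y s‖)
        ≤ ((9*2^(n+1))*M)^2 * (2^N * ((1/4) * (1/2)^(2^n))) := by
          refine mul_le_mul ?_ (tail n) (pr_nonneg _) (sq_nonneg _)
          refine pow_le_pow_left₀ hfc ?_ 2
          refine mul_le_mul_of_nonneg_right (by linarith) hM0
      _ = 2^N * M^2 * (81 * (4^n * (1/2)^(2^n))) := by
          have h4 : ((4:ℝ))^n = ((2:ℝ)^n)^2 := by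
            rw [← pow_mul, mul_comm n 2, pow_mul]
            norm_num
          rw [h4, pow_succ]
          ring
      _ ≤ 2^N * M^2 * (324 * (1/2)^n) := by
          refine mul_le_mul_of_nonneg_left ?_ (by positivity)
          have hptb := pow_tail_bound n
          nlinarith
  have hgeo : ∑ n ∈ Finset.Icc 1 N, ((1:ℝ)/2)^n ≤ 1 := by
    have hico : Finset.Icc 1 N = Finset.Ico 1 (N+1) := by
      rw [Finset.Ico_add_one_right_eq_Icc]
    have hsplit : ∑ n ∈ Finset.Ico 0 1, ((1:ℝ)/2)^n + ∑ n ∈ Finset.Ico 1 (N+1), ((1:ℝ)/2)^n =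
        ∑ n ∈ Finset.Ico 0 (N+1), ((1:ℝ)/2)^n :=
      Finset.sum_Ico_consecutive _ (by omega) (by omega)
    have h01 : ∑ n ∈ Finset.Ico 0 1, ((1:ℝ)/2)^n = 1 := by norm_num
    have hrange : ∑ n ∈ Finset.Ico 0 (N+1), ((1:ℝ)/2)^n ≤ 2 := by
      rw [← Finset.range_eq_Ico]
      exact sum_geometric_two_le _
    rw [hico]
    linarith
  have hsum324 : ∑ n ∈ Finset.Icc 1 N, 2^N * M^2 * (324 * (1/2)^n) ≤ 2^N * M^2 * 324 := by
    have : ∑ n ∈ Finset.Icc 1 N, 2^N * M^2 * (324 * (1/2)^n) =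
        2^N * M^2 * 324 * ∑ n ∈ Finset.Icc 1 N, ((1:ℝ)/2)^n := by
      rw [Finset.mul_sum]
      refine Finset.sum_congr rfl fun n _ => by ring
    rw [this]
    nlinarith [mul_le_mul_of_nonneg_left hgeo (by positivity : (0:ℝ) ≤ 2^N * M^2 * 324)]
  have hconst : 2^N * ((9*2^1 - 1 : ℝ)*M)^2 = 2^N * (289 * M^2) := by norm_num; ring
  calc ∑ s : Fin N → Bool, ‖S y s‖^2
      ≤ 2^N * ((9*2^1 - 1 : ℝ)*M)^2 + ∑ n ∈ Finset.Icc 1 N, 2^N * M^2 * (324 * (1/2)^n) := by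
        linarith
    _ ≤ 2^N * (289 * M^2) + 2^N * M^2 * 324 := by
        rw [← hconst] at *
        linarith [hsum324, hconst]
    _ ≤ 1024 * M^2 * 2^N := by nlinarith [h2N.le, sq_nonneg M]


/-! ### pairing orthogonality -/

def eps (j : Fin N) (s : Fin N → Bool) : ℝ := if s j then 1 else -1

lemma sum_eps_mul (j k : Fin N) (hjk : j ≠ k) :
    ∑ s : Fin N → Bool, eps j s * eps k s = 0 := by
  have hflip := sum_flip (M := ℝ) (fun i => decide (i = j)) (fun s => eps j s * eps k s)
  have hneg : ∀ s : Fin N → Bool, eps j (flip (fun i => decide (i = j)) s) *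
      eps k (flip (fun i => decide (i = j)) s) = -(eps j s * eps k s) := by
    intro s
    have h1 : flip (fun i => decide (i = j)) s j = !(s j) := by simp [flip]
    have h2 : flip (fun i => decide (i = j)) s k = s k := by
      simp [flip, Ne.symm hjk]
    cases hs : s j <;> cases hs' : s k <;> simp [eps, h1, h2, hs, hs']
  rw [Finset.sum_congr rfl (fun s _ => hneg s), Finset.sum_neg_distrib] at hflip
  linarith

lemma sum_eps_sq (j : Fin N) : ∑ s : Fin N → Bool, eps j s * eps j s = 2^N := by
  have h1 : ∀ s : Fin N → Bool, eps j s * eps j s = 1 := fun s => by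
    cases h : s j <;> simp [eps, h]
  rw [Finset.sum_congr rfl (fun s _ => h1 s), Finset.sum_const, Finset.card_univ, nsmul_eq_mul]
  simp

variable {X : Type*} [NormedAddCommGroup X] [NormedSpace ℝ X]

lemma pairing (φ : Fin N → (X →L[ℝ] ℝ)) (v : Fin N → X) :
    ∑ s : Fin N → Bool, (S φ s) (S v s) = 2^N * ∑ k, (φ k) (v k) := by
  have expand : ∀ s, (S φ s) (S v s) = ∑ j, ∑ k, eps j s * eps k s * ((φ j) (v k)) := by
    intro s
    show (∑ j : Fin N, (if s j then φ j else -φ j)) (S v s) = _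
    rw [ContinuousLinearMap.sum_apply]
    refine Finset.sum_congr rfl fun j _ => ?_
    have hmap : (if s j then φ j else -φ j) (S v s) =
        ∑ k, (if s j then φ j else -φ j) ((if s k then v k else -v k)) := by
      show (if s j then φ j else -φ j) (∑ k : Fin N, (if s k then v k else -v k)) = _
      exact map_sum _ _ _
    rw [hmap]
    refine Finset.sum_congr rfl fun k _ => ?_
    cases hj : s j <;> cases hk : s k <;>
      simp [eps, hj, hk, ContinuousLinearMap.neg_apply, map_neg]
  calc ∑ s : Fin N → Bool, (S φ s) (S v s)
      = ∑ s : Fin N → Bool, ∑ j, ∑ k, eps j s * eps k s * ((φ j) (v k)) :=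
        Finset.sum_congr rfl fun s _ => expand s
    _ = ∑ j, ∑ s : Fin N → Bool, ∑ k, eps j s * eps k s * ((φ j) (v k)) := Finset.sum_comm
    _ = ∑ j, ∑ k, ∑ s : Fin N → Bool, eps j s * eps k s * ((φ j) (v k)) :=
        Finset.sum_congr rfl fun j _ => Finset.sum_comm
    _ = ∑ j, ∑ k, (∑ s : Fin N → Bool, eps j s * eps k s) * ((φ j) (v k)) := by
        refine Finset.sum_congr rfl fun j _ => Finset.sum_congr rfl fun k _ => ?_
        rw [Finset.sum_mul]
    _ = ∑ j : Fin N, 2^N * ((φ j) (v j)) := by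
        refine Finset.sum_congr rfl fun j _ => ?_
        rw [Finset.sum_eq_single j
          (fun k _ hk => by rw [sum_eps_mul j k (Ne.symm hk), zero_mul]) (by simp), sum_eps_sq]
    _ = 2^N * ∑ k, (φ k) (v k) := by rw [Finset.mul_sum]

lemma ite_one_smul {W : Type*} [AddCommGroup W] [Module ℝ W] (c : Bool) (w : W) :
    (if c then (1:ℝ) else -1) • w = if c then w else -w := by
  cases c <;> simp

end Stmt17Aux

open Stmt17Aux

/-- If a Banach space `X` has (Rademacher) type `t ∈ (1,2]`, i.e.
`𝔼‖∑ ε_k x_k‖ ≤ T (∑‖x_k‖^t)^{1/t}` for all finite sequences in `X`, then its dual `X*`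
has cotype `t' = t/(t-1)`: there is `C` with `(∑‖x*_k‖^{t'})^{1/t'} ≤ C 𝔼‖∑ ε_k x*_k‖`
for all finite sequences in `X*`. Here the Rademacher expectation is realized as the
average over all sign patterns `s : Fin N → Bool`. -/
theorem stmt17 (X : Type*) [NormedAddCommGroup X] [NormedSpace ℝ X] [CompleteSpace X]
    (t T : ℝ) (ht1 : 1 < t) (ht2 : t ≤ 2) (hT : 0 < T)
    (htype : ∀ (N : ℕ) (x : Fin N → X),
      (∑ s : Fin N → Bool, ‖∑ k, (if s k then (1 : ℝ) else -1) • x k‖) / 2 ^ N ≤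
        T * (∑ k, ‖x k‖ ^ t) ^ (1 / t)) :
    ∃ C : ℝ, 0 < C ∧ ∀ (N : ℕ) (x : Fin N → StrongDual ℝ X),
      (∑ k, ‖x k‖ ^ (t / (t - 1))) ^ ((t - 1) / t) ≤
        C * ((∑ s : Fin N → Bool, ‖∑ k, (if s k then (1 : ℝ) else -1) • x k‖) / 2 ^ N) := by
  classical
  refine ⟨2048 * T, by positivity, ?_⟩
  intro N φ
  have ht0 : (0:ℝ) < t := by linarith
  have htm1 : (0:ℝ) < t - 1 := by linarith
  set q : ℝ := t / (t - 1) with hq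
  have hq1 : 1 < q := by rw [hq, lt_div_iff₀ htm1]; linarith
  have hq0 : (0:ℝ) < q := by linarith
  have h2N : (0:ℝ) < 2^N := by positivity
  -- convert the scalar-smul form into the `S` form
  have hFconv : ∀ s : Fin N → Bool,
      (∑ k, (if s k then (1:ℝ) else -1) • φ k) = S φ s :=
    fun s => Finset.sum_congr rfl fun k _ => ite_one_smul (s k) (φ k)
  have hgoalF : (∑ s : Fin N → Bool, ‖∑ k, (if s k then (1:ℝ) else -1) • φ k‖) =
      ∑ s : Fin N → Bool, ‖S φ s‖ :=
    Finset.sum_congr rfl fun s _ => by rw [hFconv s]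
  rw [hgoalF]
  set SF : ℝ := ∑ s : Fin N → Bool, ‖S φ s‖ with hSF
  have hSF0 : 0 ≤ SF := Finset.sum_nonneg fun s _ => norm_nonneg _
  -- choose near-norming vectors
  have hchoice : ∀ k : Fin N, ∃ w : X, ‖w‖ ≤ ‖φ k‖ ^ (q - 1) ∧ ‖φ k‖ ^ q / 2 ≤ (φ k) w := by
    intro k
    rcases eq_or_lt_of_le (norm_nonneg (φ k)) with h0 | hpos
    · refine ⟨0, by simpa using Real.rpow_nonneg (norm_nonneg (φ k)) (q-1), ?_⟩
      rw [map_zero, ← h0, Real.zero_rpow (ne_of_gt hq0)]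
      norm_num
    · obtain ⟨z, hz1, hz2⟩ := (φ k).exists_lt_apply_of_lt_opNorm (r := ‖φ k‖/2) (by linarith)
      set w0 : X := if (φ k) z < 0 then -z else z with hw0
      have hw0n : ‖w0‖ ≤ 1 := by
        rw [hw0]
        split
        · rw [norm_neg]; linarith
        · linarith
      have hw0v : ‖φ k‖/2 ≤ (φ k) w0 := by
        rw [hw0]
        rcases lt_or_ge ((φ k) z) 0 with hneg | hge
        · rw [if_pos hneg, map_neg]
          have habs : ‖(φ k) z‖ = -((φ k) z) := by
            rw [Real.norm_eq_abs, abs_of_neg hneg]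
          linarith
        · rw [if_neg (not_lt.2 hge)]
          have habs : ‖(φ k) z‖ = (φ k) z := by
            rw [Real.norm_eq_abs, abs_of_nonneg hge]
          linarith
      have hr0 : (0:ℝ) ≤ ‖φ k‖ ^ (q-1) := Real.rpow_nonneg (norm_nonneg _) _
      refine ⟨(‖φ k‖ ^ (q-1)) • w0, ?_, ?_⟩
      · rw [norm_smul, Real.norm_eq_abs, abs_of_nonneg hr0]
        calc ‖φ k‖^(q-1) * ‖w0‖ ≤ ‖φ k‖^(q-1) * 1 := mul_le_mul_of_nonneg_left hw0n hr0
          _ = ‖φ k‖^(q-1) := mul_one _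
      · rw [map_smul, smul_eq_mul]
        have hpow : ‖φ k‖^(q-1) * ‖φ k‖ = ‖φ k‖^q := by
          nth_rewrite 2 [← Real.rpow_one ‖φ k‖]
          rw [← Real.rpow_add hpos]
          norm_num
        calc ‖φ k‖^q/2 = ‖φ k‖^(q-1) * (‖φ k‖/2) := by
              rw [mul_div_assoc', hpow]
          _ ≤ ‖φ k‖^(q-1) * ((φ k) w0) := mul_le_mul_of_nonneg_left hw0v hr0
  choose x hx1 hx2 using hchoice
  set Aq : ℝ := ∑ k, ‖φ k‖ ^ q with hAq
  have hAq0 : 0 ≤ Aq := Finset.sum_nonneg fun k _ => Real.rpow_nonneg (norm_nonneg _) _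
  -- type hypothesis applied to x
  have hGconv : (∑ s : Fin N → Bool, ‖∑ k, (if s k then (1:ℝ) else -1) • x k‖) =
      ∑ s : Fin N → Bool, ‖S x s‖ :=
    Finset.sum_congr rfl fun s _ =>
      congrArg norm (Finset.sum_congr rfl fun k _ => ite_one_smul (s k) (x k))
  set SG : ℝ := ∑ s : Fin N → Bool, ‖S x s‖ with hSG
  have hSG0 : 0 ≤ SG := Finset.sum_nonneg fun s _ => norm_nonneg _
  have hEG : SG / 2^N ≤ T * Aq^(1/t) := by
    have h1 := htype N x
    rw [hGconv] at h1
    refine h1.trans ?_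
    refine mul_le_mul_of_nonneg_left ?_ hT.le
    refine Real.rpow_le_rpow (Finset.sum_nonneg fun k _ => Real.rpow_nonneg (norm_nonneg _) _)
      ?_ (by positivity)
    refine Finset.sum_le_sum fun k _ => ?_
    calc ‖x k‖^t ≤ (‖φ k‖^(q-1))^t :=
          Real.rpow_le_rpow (norm_nonneg _) (hx1 k) ht0.le
      _ = ‖φ k‖^((q-1)*t) := (Real.rpow_mul (norm_nonneg _) _ _).symm
      _ = ‖φ k‖^q := by
          congr 1
          rw [hq]
          field_simp
          ring
  -- lower bound for the pairing
  have hlow : Aq / 2 ≤ ∑ k, (φ k) (x k) := by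
    rw [hAq, Finset.sum_div]
    exact Finset.sum_le_sum fun k _ => hx2 k
  -- pairing identity and Cauchy–Schwarz
  have hpair := pairing φ x
  have hP : (2:ℝ)^N * (Aq/2) ≤ ∑ s : Fin N → Bool, ‖S φ s‖ * ‖S x s‖ := by
    calc (2:ℝ)^N * (Aq/2) ≤ 2^N * ∑ k, (φ k) (x k) :=
          mul_le_mul_of_nonneg_left hlow h2N.le
      _ = ∑ s : Fin N → Bool, (S φ s) (S x s) := hpair.symm
      _ ≤ ∑ s : Fin N → Bool, ‖S φ s‖ * ‖S x s‖ := by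
          refine Finset.sum_le_sum fun s _ => ?_
          calc (S φ s) (S x s) ≤ ‖(S φ s) (S x s)‖ := Real.le_norm_self _
            _ ≤ ‖S φ s‖ * ‖S x s‖ := (S φ s).le_opNorm (S x s)
  have hCS := Finset.sum_mul_sq_le_sq_mul_sq Finset.univ
    (fun s : Fin N → Bool => ‖S φ s‖) (fun s => ‖S x s‖)
  have hKF := kahane φ
  have hKG := kahane x
  rw [← hSF] at hKF
  rw [← hSG] at hKG
  have hPsq : (∑ s : Fin N → Bool, ‖S φ s‖ * ‖S x s‖)^2 ≤
      (1024 * SF * SG / 2^N)^2 := by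
    calc (∑ s : Fin N → Bool, ‖S φ s‖ * ‖S x s‖)^2
        ≤ (∑ s : Fin N → Bool, ‖S φ s‖^2) * (∑ s : Fin N → Bool, ‖S x s‖^2) := hCS
      _ ≤ (1024 * (SF/2^N)^2 * 2^N) * (1024 * (SG/2^N)^2 * 2^N) := by
          refine mul_le_mul hKF hKG (Finset.sum_nonneg fun s _ => sq_nonneg _) (by positivity)
      _ = (1024 * SF * SG / 2^N)^2 := by
          field_simp
  have hPub : ∑ s : Fin N → Bool, ‖S φ s‖ * ‖S x s‖ ≤ 1024 * SF * SG / 2^N := by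
    have hlhs0 : 0 ≤ ∑ s : Fin N → Bool, ‖S φ s‖ * ‖S x s‖ :=
      Finset.sum_nonneg fun s _ => mul_nonneg (norm_nonneg _) (norm_nonneg _)
    have hrhs0 : (0:ℝ) ≤ 1024 * SF * SG / 2^N := by positivity
    exact (pow_le_pow_iff_left₀ hlhs0 hrhs0 (two_ne_zero)).1 hPsq
  -- combine everything
  have hkey : Aq ≤ 2048 * T * (SF/2^N) * Aq^(1/t) := by
    have h1 : (2:ℝ)^N * (Aq/2) ≤ 1024 * SF * SG / 2^N := le_trans hP hPub
    have h2 : SG ≤ 2^N * (T * Aq^(1/t)) := by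
      rw [div_le_iff₀ h2N] at hEG
      linarith
    have h3 : 1024 * SF * SG / 2^N ≤ 1024 * SF * (2^N * (T * Aq^(1/t))) / 2^N := by
      refine (div_le_div_iff_of_pos_right h2N).2 ?_
      refine mul_le_mul_of_nonneg_left h2 ?_
      have : (0:ℝ) ≤ 1024 * SF := mul_nonneg (by norm_num) hSF0
      linarith
    have heq : 1024 * SF * (2^N * (T * Aq^(1/t))) / 2^N = 1024 * SF * T * Aq^(1/t) := by
      field_simp
    have h4 : (2:ℝ)^N * (Aq/2) ≤ 1024 * SF * T * Aq^(1/t) := by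
      rw [← heq]
      linarith
    have h5 : Aq ≤ 2048 * SF * T * Aq^(1/t) / 2^N := by
      rw [le_div_iff₀ h2N]
      linarith
    have heq2 : 2048 * SF * T * Aq^(1/t) / 2^N = 2048 * T * (SF/2^N) * Aq^(1/t) := by
      ring
    linarith [heq2 ▸ h5]
  -- final rpow algebra
  have hexp : (t-1)/t = 1/q := by rw [hq, one_div_div]
  rw [hexp]
  rcases eq_or_lt_of_le hAq0 with hz | hpos
  · rw [← hz, Real.zero_rpow (ne_of_gt (by positivity : (0:ℝ) < 1/q))]
    exact mul_nonneg (by positivity) (div_nonneg hSF0 h2N.le)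
  · have hApow : (0:ℝ) < Aq^(1/t) := Real.rpow_pos_of_pos hpos _
    have hsum1 : 1/q + 1/t = 1 := by
      rw [hq, one_div_div]
      field_simp
      ring
    have h6 : Aq^(1/q) = Aq / Aq^(1/t) := by
      rw [eq_div_iff (ne_of_gt hApow), ← Real.rpow_add hpos, hsum1, Real.rpow_one]
    rw [h6, div_le_iff₀ hApow]
    exact hkey
end
end
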